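/- Let Λ = (λ_k)_{k≥0} be a strictly increasing sequence of positive real numbers satisfying the Müntz condition Σ_k 1/λ_k < ∞, and let V_Λ : M_Λ^1 → C([0,1]) be the restriction of the Volterra operator, (V_Λ f)(x) = ∫_0^x f(t) dt. Then the distance from V_Λ to the weakly compact operators equals 1/2: inf{‖V_Λ − S‖ : S : M_Λ^1 → C([0,1]) bounded linear and weakly compact} = 1/2. -/

import Mathlib

open MeasureTheory Set

/-- Lebesgue measure restricted to `[0,1]`. -/
noncomputable def mu01 : Measure ℝ := volume.restrict (Icc (0:ℝ) 1)

/-- The Müntz space `M_Λ^1`: the closure in `L¹([0,1])` of the linear span of the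
monomials `t ↦ t ^ Λ k`. -/
noncomputable def muntzSpace (Λ : ℕ → ℝ) : Submodule ℝ (Lp ℝ 1 mu01) :=
  (Submodule.span ℝ {f : Lp ℝ 1 mu01 |
    ∃ k : ℕ, (f : ℝ → ℝ) =ᵐ[mu01] fun t => t ^ Λ k}).topologicalClosure

/-- A bounded linear operator between normed spaces is weakly compact if the closure,
in the weak topology of the codomain, of the image of the closed unit ball is compact. -/
def IsWeaklyCompactOperator {X Y : Type*} [NormedAddCommGroup X] [NormedSpace ℝ X]
    [NormedAddCommGroup Y] [NormedSpace ℝ Y] (S : X →L[ℝ] Y) : Prop :=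
  IsCompact (closure ((toWeakSpace ℝ Y) '' (⇑S '' Metric.closedBall 0 1)))

open Filter Topology

namespace VolterraAux

/-! ### Auxiliary material -/

lemma mu01_eq_Ioc : mu01 = volume.restrict (Ioc (0:ℝ) 1) := by
  rw [mu01]
  exact Measure.restrict_congr_set Ioc_ae_eq_Icc.symm

lemma integ_mono {r : ℝ} (hr : 0 < r) {x : ℝ} (hx : 0 ≤ x) :
    ∫ t in Ioc (0:ℝ) x, t ^ r = x ^ (r+1) / (r+1) := by
  rw [← intervalIntegral.integral_of_le hx, integral_rpow (Or.inl (by linarith))]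
  rw [Real.zero_rpow (by linarith)]
  ring

lemma memlp_mono {r : ℝ} (hr : 0 < r) : MemLp (fun t : ℝ => t ^ r) 1 mu01 := by
  rw [memLp_one_iff_integrable]
  exact (Real.continuous_rpow_const hr.le).integrableOn_Icc

lemma norm_mono {r : ℝ} (hr : 0 < r) : ‖(memlp_mono hr).toLp _‖ = 1 / (r + 1) := by
  rw [L1.norm_eq_integral_norm]
  have h1 : ∫ a, ‖((memlp_mono hr).toLp _ : ℝ → ℝ) a‖ ∂mu01
      = ∫ a, ‖a ^ r‖ ∂mu01 := by
    refine integral_congr_ae ?_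
    filter_upwards [(memlp_mono hr).coeFn_toLp] with a ha
    rw [ha]
  rw [h1]
  have h2 : ∫ a, ‖a ^ r‖ ∂mu01 = ∫ a, a ^ r ∂mu01 := by
    refine integral_congr_ae ?_
    have hmem : ∀ᵐ a ∂mu01, a ∈ Icc (0:ℝ) 1 :=
      ae_restrict_mem measurableSet_Icc
    filter_upwards [hmem] with a ha
    exact Real.norm_of_nonneg (Real.rpow_nonneg ha.1 r)
  rw [h2]
  have h3 : ∫ a, a ^ r ∂mu01 = ∫ a in Ioc (0:ℝ) 1, a ^ r := by
    show ∫ a in Icc (0:ℝ) 1, a ^ r = _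
    exact integral_Icc_eq_integral_Ioc
  rw [h3, integ_mono hr zero_le_one, Real.one_rpow]

lemma mem_muntz {Λ : ℕ → ℝ} (hpos : ∀ k, 0 < Λ k) (k : ℕ) :
    (memlp_mono (hpos k)).toLp _ ∈ muntzSpace Λ := by
  apply Submodule.le_topologicalClosure
  exact Submodule.subset_span ⟨k, (memlp_mono (hpos k)).coeFn_toLp⟩

lemma lam_tendsto {Λ : ℕ → ℝ} (hpos : ∀ k, 0 < Λ k)
    (hmuntz : Summable fun k => 1 / Λ k) : Tendsto Λ atTop atTop := by
  have h0 : Tendsto (fun k => 1 / Λ k) atTop (𝓝[>] 0) := by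
    rw [tendsto_nhdsWithin_iff]
    exact ⟨hmuntz.tendsto_atTop_zero,
      Eventually.of_forall fun k => mem_Ioi.mpr (by have := hpos k; positivity)⟩
  have := tendsto_inv_nhdsGT_zero.comp h0
  refine this.congr fun k => ?_
  simp [(hpos k).ne']

lemma V_value {r : ℝ} (hr : 0 < r) {x : ℝ} (hx : x ∈ Icc (0:ℝ) 1) :
    ∫ t in Ioc (0:ℝ) x, (((r+1) • (memlp_mono hr).toLp _ : Lp ℝ 1 mu01) : ℝ → ℝ) t ∂mu01
      = x ^ (r+1) := by
  have hcoe : (((r+1) • (memlp_mono hr).toLp _ : Lp ℝ 1 mu01) : ℝ → ℝ)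
      =ᵐ[mu01] fun t => (r+1) * t ^ r := by
    filter_upwards [Lp.coeFn_smul (r+1) ((memlp_mono hr).toLp _),
      (memlp_mono hr).coeFn_toLp] with a h1 h2
    rw [h1]
    simp [h2]
  have hsub : Ioc (0:ℝ) x ⊆ Icc (0:ℝ) 1 := fun t ht => ⟨ht.1.le, ht.2.trans hx.2⟩
  have hres : mu01.restrict (Ioc (0:ℝ) x) = volume.restrict (Ioc (0:ℝ) x) := by
    rw [mu01, Measure.restrict_restrict measurableSet_Ioc, inter_eq_left.mpr hsub]
  rw [integral_congr_ae (hcoe.filter_mono (ae_mono Measure.restrict_le_self)), hres,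
    integral_const_mul, integ_mono hr hx.1]
  field_simp

lemma key_bound (f : Lp ℝ 1 mu01) {x : ℝ} (hx : x ∈ Icc (0:ℝ) 1) :
    |(∫ t in Ioc (0:ℝ) x, (f : ℝ → ℝ) t ∂mu01) - (1/2) * ∫ t, (f : ℝ → ℝ) t ∂mu01|
      ≤ (1/2) * ‖f‖ := by
  set F : ℝ → ℝ := (f : ℝ → ℝ) with hF
  have hint : Integrable F mu01 := L1.integrable_coeFn f
  have h1 : Ioc (0:ℝ) x ⊆ Icc (0:ℝ) 1 := fun t ht => ⟨ht.1.le, ht.2.trans hx.2⟩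
  have hIOn : IntegrableOn F (Ioc (0:ℝ) 1) volume := by
    rw [IntegrableOn, ← mu01_eq_Ioc]; exact hint
  have hA : IntegrableOn F (Ioc (0:ℝ) x) volume := hIOn.mono_set (Ioc_subset_Ioc le_rfl hx.2)
  have hB : IntegrableOn F (Ioc x 1) volume := hIOn.mono_set (Ioc_subset_Ioc hx.1 le_rfl)
  have eA : ∫ t in Ioc (0:ℝ) x, F t ∂mu01 = ∫ t in Ioc (0:ℝ) x, F t := by
    rw [mu01, Measure.restrict_restrict measurableSet_Ioc, inter_eq_left.mpr h1]
  have eI : ∫ t, F t ∂mu01 = (∫ t in Ioc (0:ℝ) x, F t) + ∫ t in Ioc x 1, F t := by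
    show ∫ t in Icc (0:ℝ) 1, F t = _
    rw [integral_Icc_eq_integral_Ioc,
      ← setIntegral_union (Ioc_disjoint_Ioc_of_le le_rfl) measurableSet_Ioc hA hB,
      Ioc_union_Ioc_eq_Ioc hx.1 hx.2]
  have hnorm : ‖f‖ = ∫ t in Ioc (0:ℝ) 1, ‖F t‖ := by
    rw [L1.norm_eq_integral_norm]
    show ∫ t in Icc (0:ℝ) 1, ‖F t‖ = _
    exact integral_Icc_eq_integral_Ioc
  have hsplit : (∫ t in Ioc (0:ℝ) x, ‖F t‖) + ∫ t in Ioc x 1, ‖F t‖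
      = ∫ t in Ioc (0:ℝ) 1, ‖F t‖ := by
    rw [← setIntegral_union (Ioc_disjoint_Ioc_of_le le_rfl) measurableSet_Ioc hA.norm hB.norm,
      Ioc_union_Ioc_eq_Ioc hx.1 hx.2]
  rw [eA, eI, hnorm]
  have b1 : |∫ t in Ioc (0:ℝ) x, F t| ≤ ∫ t in Ioc (0:ℝ) x, ‖F t‖ :=
    norm_integral_le_integral_norm F
  have b2 : |∫ t in Ioc x 1, F t| ≤ ∫ t in Ioc x 1, ‖F t‖ :=
    norm_integral_le_integral_norm F
  set A := ∫ t in Ioc (0:ℝ) x, F t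
  set B := ∫ t in Ioc x 1, F t
  rw [← hsplit]
  rw [abs_le] at *
  constructor <;> nlinarith [b1.1, b1.2, b2.1, b2.2]

/-! ### Weak topology material -/

abbrev Y := C(Icc (0:ℝ) 1, ℝ)

noncomputable def e : WeakSpace ℝ Y ≃ₗ[ℝ] Y := (toWeakSpace ℝ Y).symm

noncomputable def F (x : Icc (0:ℝ) 1) : WeakSpace ℝ Y → ℝ :=
  fun y => (ContinuousMap.evalCLM ℝ x) (e y)

lemma F_cont (x : Icc (0:ℝ) 1) : Continuous (F x) :=
  WeakBilin.eval_continuous ((topDualPairing ℝ Y).flip) (ContinuousMap.evalCLM ℝ x)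

noncomputable def pt1 : Icc (0:ℝ) 1 := ⟨1, by norm_num⟩

lemma F_toWeakSpace (x : Icc (0:ℝ) 1) (z : Y) : F x (toWeakSpace ℝ Y z) = z x := by
  show (ContinuousMap.evalCLM ℝ x) (e (toWeakSpace ℝ Y z)) = z x
  rw [show e (toWeakSpace ℝ Y z) = z from (toWeakSpace ℝ Y).symm_apply_apply _]
  simp [ContinuousMap.evalCLM]

lemma F_eq_e (x : Icc (0:ℝ) 1) (y : WeakSpace ℝ Y) : F x y = (e y) x := by
  simp [F, ContinuousMap.evalCLM]

lemma rankone_wc {X : Type*} [NormedAddCommGroup X] [NormedSpace ℝ X]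
    (L : X →L[ℝ] ℝ) : IsWeaklyCompactOperator (L.smulRight (1 : Y)) := by
  set S := L.smulRight (1 : Y)
  set K : Set (WeakSpace ℝ Y) :=
    {y | (∀ x, F x y = F pt1 y) ∧ F pt1 y ∈ Icc (-‖L‖) ‖L‖} with hKdef
  have hKclosed : IsClosed K := by
    have hset : K = (⋂ x, {y | F x y = F pt1 y}) ∩ (F pt1)⁻¹' (Icc (-‖L‖) ‖L‖) := by
      ext y; simp [hKdef, mem_iInter]
    rw [hset]
    exact IsClosed.inter (isClosed_iInter fun x => isClosed_eq (F_cont x) (F_cont pt1))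
      (isClosed_Icc.preimage (F_cont pt1))
  have hsub : (toWeakSpace ℝ Y) '' (⇑S '' Metric.closedBall 0 1) ⊆ K := by
    rintro _ ⟨_, ⟨f, hf, rfl⟩, rfl⟩
    have hFv : ∀ x, F x (toWeakSpace ℝ Y (S f)) = L f := by
      intro x
      rw [F_toWeakSpace]
      simp [S]
    constructor
    · intro x; rw [hFv x, hFv pt1]
    · rw [hFv pt1]
      have : ‖L f‖ ≤ ‖L‖ := by
        calc ‖L f‖ ≤ ‖L‖ * ‖f‖ := L.le_opNorm f
        _ ≤ ‖L‖ * 1 := by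
            have := mem_closedBall_zero_iff.mp hf
            exact mul_le_mul_of_nonneg_left this (norm_nonneg L)
        _ = ‖L‖ := mul_one _
      rw [Real.norm_eq_abs, abs_le] at this
      exact ⟨this.1, this.2⟩
  have hKC : K ⊆ (toWeakSpace ℝ Y) '' ((fun c : ℝ => c • (1 : Y)) '' Icc (-‖L‖) ‖L‖) := by
    rintro y ⟨h1, h2⟩
    refine ⟨(F pt1 y) • (1 : Y), ⟨F pt1 y, h2, rfl⟩, ?_⟩
    have hey : e y = (F pt1 y) • (1 : Y) := by
      ext x
      have := h1 x
      rw [F_eq_e, F_eq_e] at this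
      simpa [F_eq_e] using this
    calc toWeakSpace ℝ Y ((F pt1 y) • (1:Y)) = toWeakSpace ℝ Y (e y) := by rw [hey]
    _ = y := (toWeakSpace ℝ Y).apply_symm_apply y
  have hCcomp : IsCompact
      ((toWeakSpace ℝ Y) '' ((fun c : ℝ => c • (1 : Y)) '' Icc (-‖L‖) ‖L‖)) := by
    have h1 : IsCompact ((fun c : ℝ => c • (1 : Y)) '' Icc (-‖L‖) ‖L‖) :=
      isCompact_Icc.image (continuous_id.smul continuous_const)
    have heq : ⇑(toWeakSpace ℝ Y) = ⇑(toWeakSpaceCLM ℝ Y) := rfl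
    rw [heq]
    exact h1.image (toWeakSpaceCLM ℝ Y).continuous
  exact hCcomp.of_isClosed_subset isClosed_closure
    ((closure_minimal hsub hKclosed).trans hKC)


lemma half_le {a b w H s N η : ℝ} (h1 : |a - w| < η) (h2 : |b - H| < η)
    (h3 : |w - H| < η) (hs0 : 0 ≤ s) (hs1 : s < η)
    (e1 : |1 - b| ≤ N) (e2 : |s - a| ≤ N) : 1/2 ≤ N + 2*η := by
  have t1 : |1 - H| ≤ |1 - b| + |b - H| := abs_sub_le 1 b H
  have t2 : |H - a| ≤ |H - w| + |w - a| := abs_sub_le H w a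
  have t3 : |H| ≤ |H - a| + |a| := by simpa using abs_add_le (H - a) a
  have t4 : |a| ≤ |a - s| + s := by
    have := abs_add_le (a - s) s
    rw [abs_of_nonneg hs0] at this
    simpa using this
  have t5 : (1:ℝ) ≤ |1 - H| + |H| := by simpa using abs_add_le (1 - H) H
  have t6 : |H - w| = |w - H| := abs_sub_comm H w
  have t7 : |w - a| = |a - w| := abs_sub_comm w a
  have t8 : |a - s| = |s - a| := abs_sub_comm a s
  linarith

end VolterraAux

open VolterraAux

set_option maxHeartbeats 2000000

/-- Under the Müntz condition, the distance from the restricted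
Volterra operator `V_Λ : M_Λ^1 → C([0,1])` to the weakly compact operators equals `1/2`. -/
theorem volterra_restriction_weakEssentialNorm_eq_half
    (Λ : ℕ → ℝ) (hmono : StrictMono Λ) (hpos : ∀ k, 0 < Λ k)
    (hmuntz : Summable fun k => 1 / Λ k)
    (V : ↥(muntzSpace Λ) →L[ℝ] C(Icc (0:ℝ) 1, ℝ))
    (hV : ∀ (f : ↥(muntzSpace Λ)) (x : Icc (0:ℝ) 1),
      V f x = ∫ t in Ioc (0:ℝ) (x:ℝ), ((f : Lp ℝ 1 mu01) : ℝ → ℝ) t ∂mu01) :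
    sInf {c : ℝ | ∃ S : ↥(muntzSpace Λ) →L[ℝ] C(Icc (0:ℝ) 1, ℝ),
      IsWeaklyCompactOperator S ∧ c = ‖V - S‖} = 1/2 := by
  classical
  set M := ↥(muntzSpace Λ)
  -- the normalized monomials
  have hpos1 : ∀ k, (0:ℝ) < Λ k + 1 := fun k => by have := hpos k; linarith
  set g : ℕ → M := fun k =>
    ⟨(Λ k + 1) • (memlp_mono (hpos k)).toLp _,
      Submodule.smul_mem _ _ (mem_muntz hpos k)⟩ with hgdef
  have hgnorm : ∀ k, ‖g k‖ = 1 := by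
    intro k
    have : ‖g k‖ = ‖(Λ k + 1) • (memlp_mono (hpos k)).toLp _‖ := rfl
    rw [this, norm_smul, norm_mono (hpos k), Real.norm_eq_abs,
      abs_of_pos (hpos1 k)]
    rw [mul_one_div, div_self (hpos1 k).ne']
  have hVg : ∀ k (x : Icc (0:ℝ) 1), V (g k) x = (x:ℝ) ^ (Λ k + 1) := by
    intro k x
    rw [hV (g k) x]
    exact V_value (hpos k) x.2
  -- the rank one comparison operator
  set L : M →L[ℝ] ℝ :=
    (1/2 : ℝ) • (L1.integralCLM.comp (muntzSpace Λ).subtypeL) with hLdef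
  set S₀ : M →L[ℝ] C(Icc (0:ℝ) 1, ℝ) := L.smulRight (1 : Y) with hS₀def
  have hS₀wc : IsWeaklyCompactOperator S₀ := rankone_wc L
  have hS₀app : ∀ (f : M) (x : Icc (0:ℝ) 1),
      S₀ f x = (1/2) * ∫ t, ((f : Lp ℝ 1 mu01) : ℝ → ℝ) t ∂mu01 := by
    intro f x
    have : L f = (1/2) * ∫ t, ((f : Lp ℝ 1 mu01) : ℝ → ℝ) t ∂mu01 := by
      rw [hLdef]
      simp only [ContinuousLinearMap.smul_apply, ContinuousLinearMap.comp_apply,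
        smul_eq_mul]
      congr 1
      rw [← L1.integral_eq, L1.integral_eq_integral]
      rfl
    simp [hS₀def, this]
  -- upper bound
  have hupper : ‖V - S₀‖ ≤ 1/2 := by
    refine ContinuousLinearMap.opNorm_le_bound _ (by norm_num) fun f => ?_
    rw [ContinuousLinearMap.sub_apply]
    refine (ContinuousMap.norm_le _ (by positivity)).mpr fun x => ?_
    rw [ContinuousMap.sub_apply, hV f x, hS₀app f x, Real.norm_eq_abs]
    exact key_bound (f : Lp ℝ 1 mu01) x.2
  -- lower bound
  have hlower : ∀ S : M →L[ℝ] C(Icc (0:ℝ) 1, ℝ),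
      IsWeaklyCompactOperator S → 1/2 ≤ ‖V - S‖ := by
    intro S hS
    set u : ℕ → WeakSpace ℝ Y := fun k => toWeakSpace ℝ Y (S (g k)) with hudef
    have hu : ∀ k, u k ∈ closure ((toWeakSpace ℝ Y) '' (⇑S '' Metric.closedBall 0 1)) := by
      intro k
      exact subset_closure ⟨S (g k), ⟨g k, mem_closedBall_zero_iff.mpr (hgnorm k).le, rfl⟩, rfl⟩
    have hle : Filter.map u atTop ≤ Filter.principal
        (closure ((toWeakSpace ℝ Y) '' (⇑S '' Metric.closedBall 0 1))) :=
      Filter.le_principal_iff.mpr (Filter.mem_map.mpr (Filter.Eventually.of_forall hu))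
    obtain ⟨h, -, hcl⟩ := hS.exists_clusterPt hle
    refine le_of_forall_pos_le_add fun ε hε => ?_
    set η := ε / 4 with hηdef
    have hη : 0 < η := by positivity
    -- choose a point close to 1
    obtain ⟨δ, hδ, hδball⟩ := Metric.continuousAt_iff.mp ((e h).continuous.continuousAt (x := pt1)) η hη
    set t : ℝ := 1 - min δ 1 / 2 with htdef
    have hmin : 0 < min δ 1 := lt_min hδ one_pos
    have ht0 : 0 ≤ t := by
      have : min δ 1 ≤ 1 := min_le_right _ _
      simp only [htdef]; linarith
    have ht1 : t < 1 := by simp only [htdef]; linarith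
    set p : Icc (0:ℝ) 1 := ⟨t, ⟨ht0, ht1.le⟩⟩ with hpdef
    have hdistp : dist p pt1 < δ := by
      rw [Subtype.dist_eq]
      simp only [hpdef, pt1, Real.dist_eq, htdef]
      rw [abs_of_nonpos (by linarith [min_le_right δ 1])]
      linarith [min_le_left δ 1]
    have hxnear : |(e h) p - (e h) pt1| < η := by
      have := hδball hdistp
      rwa [Real.dist_eq] at this
    -- eventually the monomials are small at p
    have hev : ∀ᶠ k in atTop, |t ^ (Λ k + 1)| < η := by
      have hlam : Tendsto (fun k => Λ k + 1) atTop atTop :=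
        tendsto_atTop_add_const_right atTop 1 (lam_tendsto hpos hmuntz)
      have hbase : Tendsto (fun k => t ^ (Λ k + 1)) atTop (𝓝 0) :=
        (tendsto_rpow_atTop_of_base_lt_one t (by linarith) ht1).comp hlam
      have := Metric.tendsto_nhds.mp hbase η hη
      simpa [Real.dist_eq] using this
    -- frequently the values of S (g k) are close to h
    set U : Set (WeakSpace ℝ Y) :=
      {y | |F p y - F p h| < η ∧ |F pt1 y - F pt1 h| < η} with hUdef
    have hUopen : IsOpen U := by
      have c1 : Continuous fun y : WeakSpace ℝ Y => |F p y - F p h| :=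
        ((F_cont p).sub continuous_const).abs
      have c2 : Continuous fun y : WeakSpace ℝ Y => |F pt1 y - F pt1 h| :=
        ((F_cont pt1).sub continuous_const).abs
      exact (isOpen_lt c1 continuous_const).inter (isOpen_lt c2 continuous_const)
    have hUmem : U ∈ 𝓝 h := hUopen.mem_nhds (by simp [hUdef, hη])
    have hfreq := (mapClusterPt_iff_frequently.mp hcl U hUmem).and_eventually hev
    obtain ⟨k, ⟨hk1, hk2⟩, hk3⟩ := hfreq.exists
    -- put the estimates together
    have hk1' : |S (g k) p - (e h) p| < η := by
      have h1 : F p (u k) = S (g k) p := F_toWeakSpace p (S (g k))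
      have h2 : F p h = (e h) p := F_eq_e p h
      rwa [h1, h2] at hk1
    have hk2' : |S (g k) pt1 - (e h) pt1| < η := by
      have h1 : F pt1 (u k) = S (g k) pt1 := F_toWeakSpace pt1 (S (g k))
      have h2 : F pt1 h = (e h) pt1 := F_eq_e pt1 h
      rwa [h1, h2] at hk2
    have hs0 : (0:ℝ) ≤ t ^ (Λ k + 1) := Real.rpow_nonneg ht0 _
    have hs1 : t ^ (Λ k + 1) < η := by
      rwa [abs_of_nonneg hs0] at hk3
    have hno : ‖(V - S) (g k)‖ ≤ ‖V - S‖ := by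
      have := (V - S).le_opNorm (g k)
      rwa [hgnorm k, mul_one] at this
    have est1 : |1 - S (g k) pt1| ≤ ‖V - S‖ := by
      have e1 : ((V - S) (g k)) pt1 = 1 - S (g k) pt1 := by
        rw [ContinuousLinearMap.sub_apply, ContinuousMap.sub_apply, hVg k pt1]
        rw [show ((pt1 : Icc (0:ℝ) 1) : ℝ) = 1 from rfl, Real.one_rpow]
      calc |1 - S (g k) pt1| = ‖((V - S) (g k)) pt1‖ := by rw [e1, Real.norm_eq_abs]
      _ ≤ ‖(V - S) (g k)‖ := ContinuousMap.norm_coe_le_norm _ _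
      _ ≤ ‖V - S‖ := hno
    have est2 : |t ^ (Λ k + 1) - S (g k) p| ≤ ‖V - S‖ := by
      have e2 : ((V - S) (g k)) p = t ^ (Λ k + 1) - S (g k) p := by
        rw [ContinuousLinearMap.sub_apply, ContinuousMap.sub_apply, hVg k p]
      calc |t ^ (Λ k + 1) - S (g k) p| = ‖((V - S) (g k)) p‖ := by
            rw [e2, Real.norm_eq_abs]
      _ ≤ ‖(V - S) (g k)‖ := ContinuousMap.norm_coe_le_norm _ _
      _ ≤ ‖V - S‖ := hno
    -- final arithmetic
    have final := half_le hk1' hk2' hxnear hs0 hs1 est1 est2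
    rw [hηdef] at final
    linarith
  -- conclude
  have hmemS₀ : ‖V - S₀‖ ∈ {c : ℝ | ∃ S : M →L[ℝ] C(Icc (0:ℝ) 1, ℝ),
      IsWeaklyCompactOperator S ∧ c = ‖V - S‖} := ⟨S₀, hS₀wc, rfl⟩
  have hbdd : BddBelow {c : ℝ | ∃ S : M →L[ℝ] C(Icc (0:ℝ) 1, ℝ),
      IsWeaklyCompactOperator S ∧ c = ‖V - S‖} := by
    refine ⟨1/2, ?_⟩
    rintro c ⟨S, hS, rfl⟩
    exact hlower S hS
  refine le_antisymm ?_ ?_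
  · exact (csInf_le hbdd hmemS₀).trans hupper
  · refine le_csInf ⟨_, hmemS₀⟩ ?_
    rintro c ⟨S, hS, rfl⟩
    exact hlower S hS
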